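/- arXiv:2007.00151 — 2 statements merged into one kernel-verified Lean document; each statement's English description precedes it below -/
import Mathlib

section
/- For data in general position, the number of subsets S of an n-point set X ⊂ ℝ^p that are linearly separable (by a hyperplane through the origin, homogeneous separation) from their complement equals C(n,p) = 2 Σ_{k=0}^{p-1} binom(n-1, k) (Cover's function counting theorem / Schläfli formula). Consequently, the number of non-separable dichotomies is 2^n - C(n,p) = 2 Σ_{k=0}^{n-p-1} binom(n-1, k). -/
open Finset

open Finset Module Filter
open scoped RealInnerProductSpace Topology

noncomputable section

abbrev Euc (p : ℕ) := EuclideanSpace ℝ (Fin p)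

def SepD {p n : ℕ} (y : Fin n → Euc p) (S : Finset (Fin n)) : Prop :=
  ∃ w : Euc p, (∀ i ∈ S, 0 < ⟪w, y i⟫) ∧ ∀ i ∉ S, ⟪w, y i⟫ < 0

def GP (p : ℕ) {n : ℕ} (y : Fin n → Euc p) : Prop :=
  ∀ s : Finset (Fin n), s.card ≤ p → ∀ a : Fin n → ℝ,
    ∑ i ∈ s, a i • y i = 0 → ∀ i ∈ s, a i = 0

theorem exists_pos_forall_lt {n : ℕ} (f g : Fin n → ℝ) (hf : ∀ i, 0 < f i) :
    ∃ ε : ℝ, 0 < ε ∧ ∀ i, ε * g i < f i := by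
  have h2 : ∀ᶠ ε in 𝓝[>] (0:ℝ), ∀ i, ε * g i < f i := by
    rw [Filter.eventually_all]
    intro i
    have ht : Tendsto (fun ε : ℝ => ε * g i) (𝓝[>] 0) (𝓝 0) := by
      have h0 : Tendsto (fun ε : ℝ => ε * g i) (𝓝 0) (𝓝 (0 * g i)) :=
        (continuous_id.mul continuous_const).tendsto 0
      simpa using h0.mono_left nhdsWithin_le_nhds
    exact ht.eventually_lt_const (hf i)
  have h1 : ∀ᶠ ε in 𝓝[>] (0:ℝ), 0 < ε := eventually_mem_nhdsWithin.mono (fun x hx => hx)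
  exact (h1.and h2).exists

/-- sign-preserving perturbation -/
theorem perturb {p n : ℕ} (z : Fin n → Euc p) (w v : Euc p)
    (h : ∀ i, ⟪w, z i⟫ ≠ 0) :
    ∃ ε : ℝ, 0 < ε ∧ ∀ c : ℝ, |c| ≤ ε → ∀ i,
      (0 < ⟪w, z i⟫ → 0 < ⟪w + c • v, z i⟫) ∧
      (⟪w, z i⟫ < 0 → ⟪w + c • v, z i⟫ < 0) := by
  obtain ⟨ε, hε, hlt⟩ := exists_pos_forall_lt (fun i => |⟪w, z i⟫|)
    (fun i => |⟪v, z i⟫|) (fun i => abs_pos.2 (h i))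
  refine ⟨ε, hε, fun c hc i => ?_⟩
  have key : |c * ⟪v, z i⟫| < |⟪w, z i⟫| := by
    rw [abs_mul]
    calc |c| * |⟪v, z i⟫| ≤ ε * |⟪v, z i⟫| := by
          apply mul_le_mul_of_nonneg_right hc (abs_nonneg _)
      _ < |⟪w, z i⟫| := hlt i
  have expand : ⟪w + c • v, z i⟫ = ⟪w, z i⟫ + c * ⟪v, z i⟫ := by
    rw [inner_add_left, real_inner_smul_left]
  rw [expand]
  constructor
  · intro hpos
    rw [abs_of_pos hpos] at key
    have := neg_abs_le (c * ⟪v, z i⟫)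
    linarith
  · intro hneg
    rw [abs_of_neg hneg] at key
    have := le_abs_self (c * ⟪v, z i⟫)
    linarith


def res {n : ℕ} (S : Finset (Fin (n+1))) : Finset (Fin n) :=
  Finset.filter (fun i => Fin.castSucc i ∈ S) Finset.univ

def e0 {n : ℕ} (T : Finset (Fin n)) : Finset (Fin (n+1)) := T.map Fin.castSuccEmb

def e1 {n : ℕ} (T : Finset (Fin n)) : Finset (Fin (n+1)) :=
  insert (Fin.last n) (e0 T)

def Amb {p n : ℕ} (z : Fin (n+1) → Euc p) (T : Finset (Fin n)) : Prop :=
  ∃ w : Euc p, (∀ i ∈ T, 0 < ⟪w, z i.castSucc⟫) ∧ (∀ i ∉ T, ⟪w, z i.castSucc⟫ < 0) ∧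
    ⟪w, z (Fin.last n)⟫ = 0

section FinsetLemmas
variable {n : ℕ} (T : Finset (Fin n)) (S : Finset (Fin (n+1)))

@[simp] theorem mem_e0 {j : Fin n} : j.castSucc ∈ e0 T ↔ j ∈ T := by
  simp [e0, Fin.castSuccEmb, Fin.castSucc_injective n |>.eq_iff]
  constructor
  · rintro ⟨a, ha, h⟩
    have : a = j := Fin.castSucc_injective n h
    exact this ▸ ha
  · exact fun h => ⟨j, h, rfl⟩

theorem last_not_mem_e0 : Fin.last n ∉ e0 T := by
  simp only [e0, Finset.mem_map]
  rintro ⟨a, _, h⟩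
  exact absurd h (Fin.castSucc_lt_last a).ne

@[simp] theorem mem_e1_cast {j : Fin n} : j.castSucc ∈ e1 T ↔ j ∈ T := by
  simp only [e1, Finset.mem_insert, mem_e0]
  constructor
  · rintro (h | h)
    · exact absurd h (Fin.castSucc_lt_last j).ne
    · exact h
  · exact fun h => Or.inr h

@[simp] theorem last_mem_e1 : Fin.last n ∈ e1 T := Finset.mem_insert_self _ _

@[simp] theorem res_e0 : res (e0 T) = T := by
  ext i; simp [res]

@[simp] theorem res_e1 : res (e1 T) = T := by
  ext i; simp [res]

theorem S_eq_of_last_mem (h : Fin.last n ∈ S) : S = e1 (res S) := by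
  ext j
  induction j using Fin.lastCases with
  | last => simpa using h
  | cast i => simp [res]

theorem S_eq_of_last_not_mem (h : Fin.last n ∉ S) : S = e0 (res S) := by
  ext j
  induction j using Fin.lastCases with
  | last => simp [last_not_mem_e0, h]
  | cast i =>
    rw [mem_e0]
    simp [res]

end FinsetLemmas

section SepLemmas
variable {p n : ℕ} (z : Fin (n+1) → Euc p) (T : Finset (Fin n))

theorem sepD_e0_iff : SepD z (e0 T) ↔
    ∃ w : Euc p, (∀ i ∈ T, 0 < ⟪w, z i.castSucc⟫) ∧ (∀ i ∉ T, ⟪w, z i.castSucc⟫ < 0) ∧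
      ⟪w, z (Fin.last n)⟫ < 0 := by
  constructor
  · rintro ⟨w, hpos, hneg⟩
    refine ⟨w, fun i hi => hpos _ ((mem_e0 T).2 hi), fun i hi => hneg _ ?_,
      hneg _ (last_not_mem_e0 T)⟩
    rw [mem_e0]; exact hi
  · rintro ⟨w, hpos, hneg, hlast⟩
    refine ⟨w, fun j hj => ?_, fun j hj => ?_⟩
    · obtain ⟨i, hi, rfl⟩ := Finset.mem_map.1 hj
      exact hpos i hi
    · induction j using Fin.lastCases with
      | last => exact hlast
      | cast i => exact hneg i (fun h => hj ((mem_e0 T).2 h))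

theorem sepD_e1_iff : SepD z (e1 T) ↔
    ∃ w : Euc p, (∀ i ∈ T, 0 < ⟪w, z i.castSucc⟫) ∧ (∀ i ∉ T, ⟪w, z i.castSucc⟫ < 0) ∧
      0 < ⟪w, z (Fin.last n)⟫ := by
  constructor
  · rintro ⟨w, hpos, hneg⟩
    refine ⟨w, fun i hi => hpos _ ((mem_e1_cast T).2 hi), fun i hi => hneg _ ?_,
      hpos _ (last_mem_e1 T)⟩
    rw [mem_e1_cast]; exact hi
  · rintro ⟨w, hpos, hneg, hlast⟩
    refine ⟨w, fun j hj => ?_, fun j hj => ?_⟩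
    · induction j using Fin.lastCases with
      | last => exact hlast
      | cast i => exact hpos i ((mem_e1_cast T).1 hj)
    · induction j using Fin.lastCases with
      | last => exact absurd (last_mem_e1 T) hj
      | cast i => exact hneg i (fun h => hj ((mem_e1_cast T).2 h))

theorem sepD_res {S : Finset (Fin (n+1))} (h : SepD z S) :
    SepD (fun i : Fin n => z i.castSucc) (res S) := by
  obtain ⟨w, hpos, hneg⟩ := h
  refine ⟨w, fun i hi => hpos _ ?_, fun i hi => hneg _ ?_⟩
  · simpa [res] using hi
  · simpa [res] using hi

theorem amb_of_both (h0 : SepD z (e0 T)) (h1 : SepD z (e1 T)) : Amb z T := by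
  obtain ⟨w0, hp0, hn0, hl0⟩ := (sepD_e0_iff z T).1 h0
  obtain ⟨w1, hp1, hn1, hl1⟩ := (sepD_e1_iff z T).1 h1
  set a0 := ⟪w0, z (Fin.last n)⟫ with ha0
  set a1 := ⟪w1, z (Fin.last n)⟫ with ha1
  have hd : 0 < a1 - a0 := by linarith
  set t := a1 / (a1 - a0) with ht
  have ht0 : 0 < t := div_pos hl1 hd
  have ht1 : 0 < 1 - t := by
    rw [ht]
    rw [sub_pos, div_lt_one hd]
    linarith
  refine ⟨t • w0 + (1 - t) • w1, fun i hi => ?_, fun i hi => ?_, ?_⟩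
  · have e : ⟪t • w0 + (1 - t) • w1, z i.castSucc⟫
        = t * ⟪w0, z i.castSucc⟫ + (1 - t) * ⟪w1, z i.castSucc⟫ := by
      rw [inner_add_left, real_inner_smul_left, real_inner_smul_left]
    rw [e]
    have := hp0 i hi; have := hp1 i hi
    positivity
  · have e : ⟪t • w0 + (1 - t) • w1, z i.castSucc⟫
        = t * ⟪w0, z i.castSucc⟫ + (1 - t) * ⟪w1, z i.castSucc⟫ := by
      rw [inner_add_left, real_inner_smul_left, real_inner_smul_left]
    rw [e]
    have h0' := hn0 i hi; have h1' := hn1 i hi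
    nlinarith
  · have e : ⟪t • w0 + (1 - t) • w1, z (Fin.last n)⟫ = t * a0 + (1 - t) * a1 := by
      rw [inner_add_left, real_inner_smul_left, real_inner_smul_left]
    rw [e, ht]
    field_simp
    ring

theorem both_of_amb (hu : z (Fin.last n) ≠ 0) (h : Amb z T) :
    SepD z (e0 T) ∧ SepD z (e1 T) := by
  obtain ⟨w, hpos, hneg, hl⟩ := h
  have hnz : ∀ i : Fin n, ⟪w, z i.castSucc⟫ ≠ 0 := by
    intro i
    by_cases hi : i ∈ T
    · exact (hpos i hi).ne'
    · exact (hneg i hi).ne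
  obtain ⟨ε, hε, hpert⟩ := perturb (fun i : Fin n => z i.castSucc) w (z (Fin.last n)) hnz
  have hu2 : 0 < ⟪z (Fin.last n), z (Fin.last n)⟫ := by
    rw [real_inner_self_eq_norm_sq]
    exact pow_pos (norm_pos_iff.2 hu) 2
  have hlast : ∀ c : ℝ, ⟪w + c • z (Fin.last n), z (Fin.last n)⟫
      = c * ⟪z (Fin.last n), z (Fin.last n)⟫ := by
    intro c
    rw [inner_add_left, real_inner_smul_left, hl, zero_add]
  constructor
  · rw [sepD_e0_iff]
    refine ⟨w + (-ε) • z (Fin.last n),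
      fun i hi => ((hpert (-ε) (by rw [abs_neg, abs_of_pos hε]) i).1 (hpos i hi)),
      fun i hi => ((hpert (-ε) (by rw [abs_neg, abs_of_pos hε]) i).2 (hneg i hi)), ?_⟩
    rw [hlast]
    exact mul_neg_of_neg_of_pos (neg_neg_iff_pos.2 hε) hu2
  · rw [sepD_e1_iff]
    refine ⟨w + ε • z (Fin.last n),
      fun i hi => ((hpert ε (by rw [abs_of_pos hε]) i).1 (hpos i hi)),
      fun i hi => ((hpert ε (by rw [abs_of_pos hε]) i).2 (hneg i hi)), ?_⟩
    rw [hlast]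
    exact mul_pos hε hu2

theorem ext_exists (hu : z (Fin.last n) ≠ 0)
    (h : SepD (fun i : Fin n => z i.castSucc) T) : SepD z (e0 T) ∨ SepD z (e1 T) := by
  obtain ⟨w, hpos, hneg⟩ := h
  rcases lt_trichotomy (⟪w, z (Fin.last n)⟫) 0 with hl | hl | hl
  · left; exact (sepD_e0_iff z T).2 ⟨w, hpos, hneg, hl⟩
  · left
    exact (both_of_amb z T hu ⟨w, hpos, hneg, hl⟩).1
  · right; exact (sepD_e1_iff z T).2 ⟨w, hpos, hneg, hl⟩

end SepLemmas

section Counting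
variable {p n : ℕ} (z : Fin (n+1) → Euc p)

open Classical in
theorem card_step (hu : z (Fin.last n) ≠ 0) :
    Nat.card {S : Finset (Fin (n+1)) // SepD z S}
      = Nat.card {T : Finset (Fin n) // SepD (fun i : Fin n => z i.castSucc) T}
        + Nat.card {T : Finset (Fin n) // Amb z T} := by
  rw [← Nat.card_sum]
  apply Nat.card_congr
  refine Equiv.ofBijective
    (fun S => if h : Fin.last n ∈ S.1 ∧ Amb z (res S.1) then Sum.inr ⟨res S.1, h.2⟩
      else Sum.inl ⟨res S.1, sepD_res z S.2⟩) ⟨?_, ?_⟩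
  · rintro ⟨S, hS⟩ ⟨S', hS'⟩ h
    ext : 1
    simp only at h ⊢
    split_ifs at h with h1 h2 h2
    all_goals first
    | exact absurd h Sum.inr_ne_inl
    | exact absurd h Sum.inl_ne_inr
    | (simp only [Sum.inr.injEq, Subtype.mk.injEq] at h
       rw [S_eq_of_last_mem S h1.1, S_eq_of_last_mem S' h2.1, h])
    | (simp only [Sum.inl.injEq, Subtype.mk.injEq] at h
       by_cases m1 : Fin.last n ∈ S <;> by_cases m2 : Fin.last n ∈ S'
       · rw [S_eq_of_last_mem S m1, S_eq_of_last_mem S' m2, h]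
       · exfalso
         apply h1
         refine ⟨m1, amb_of_both z (res S) ?_ ?_⟩
         · rw [h, ← S_eq_of_last_not_mem S' m2]; exact hS'
         · rw [← S_eq_of_last_mem S m1]; exact hS
       · exfalso
         apply h2
         refine ⟨m2, amb_of_both z (res S') ?_ ?_⟩
         · rw [← h, ← S_eq_of_last_not_mem S m1]; exact hS
         · rw [← S_eq_of_last_mem S' m2]; exact hS'
       · rw [S_eq_of_last_not_mem S m1, S_eq_of_last_not_mem S' m2, h])
  · rintro (⟨T, hT⟩ | ⟨T, hA⟩)
    · by_cases hA : Amb z T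
      · refine ⟨⟨e0 T, (both_of_amb z T hu hA).1⟩, ?_⟩
        dsimp only
        rw [dif_neg (by rw [not_and]; intro hmem; exact absurd hmem (last_not_mem_e0 T))]
        simp [res_e0]
      · rcases ext_exists z T hu hT with h0 | h1
        · refine ⟨⟨e0 T, h0⟩, ?_⟩
          dsimp only
          rw [dif_neg (by rw [not_and]; intro hmem; exact absurd hmem (last_not_mem_e0 T))]
          simp [res_e0]
        · refine ⟨⟨e1 T, h1⟩, ?_⟩
          dsimp only
          rw [dif_neg (by rw [not_and]; intro _; rw [res_e1]; exact hA)]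
          simp [res_e1]
    · refine ⟨⟨e1 T, (both_of_amb z T hu hA).2⟩, ?_⟩
      dsimp only
      rw [dif_pos ⟨last_mem_e1 T, by rwa [res_e1]⟩]
      simp [res_e1]

end Counting

section Proj
variable {q n : ℕ} (z : Fin (n+1) → Euc (q+1))

def OC (z : Fin (n+1) → Euc (q+1)) : Submodule ℝ (Euc (q+1)) :=
  (Submodule.span ℝ {z (Fin.last n)})ᗮ

theorem rankOC (hu : z (Fin.last n) ≠ 0) : finrank ℝ (OC z) = q := by
  have h1 := Submodule.finrank_add_finrank_orthogonal
    (K := Submodule.span ℝ {z (Fin.last n)})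
  rw [finrank_span_singleton hu, finrank_euclideanSpace_fin] at h1
  unfold OC
  omega

def projB (hu : z (Fin.last n) ≠ 0) : OrthonormalBasis (Fin q) ℝ (OC z) :=
  (stdOrthonormalBasis ℝ (OC z)).reindex (finCongr (rankOC z hu))

def proj' (hu : z (Fin.last n) ≠ 0) : Fin n → Euc q := fun i =>
  (projB z hu).repr ((OC z).orthogonalProjectionOnto (z i.castSucc))

theorem F1 (hu : z (Fin.last n) ≠ 0) (w' : Euc q) (v : Euc (q+1)) :
    ⟪w', (projB z hu).repr ((OC z).orthogonalProjectionOnto v)⟫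
      = ⟪(((projB z hu).repr.symm w' : OC z) : Euc (q+1)), v⟫ := by
  set B := projB z hu
  have h1 : ⟪(B.repr.symm w' : OC z), (OC z).orthogonalProjectionOnto v⟫
      = ⟪w', B.repr ((OC z).orthogonalProjectionOnto v)⟫ := by
    rw [← B.repr.inner_map_map (B.repr.symm w') ((OC z).orthogonalProjectionOnto v),
      B.repr.apply_symm_apply]
  rw [← h1, Submodule.inner_orthogonalProjectionOnto_eq_of_mem_left]

theorem amb_iff_sep (hu : z (Fin.last n) ≠ 0) (T : Finset (Fin n)) :
    Amb z T ↔ SepD (proj' z hu) T := by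
  constructor
  · rintro ⟨w, hp, hn, h0⟩
    have hw : w ∈ OC z := Submodule.mem_orthogonal_singleton_iff_inner_left.2 h0
    refine ⟨(projB z hu).repr ⟨w, hw⟩, fun i hi => ?_, fun i hi => ?_⟩
    · rw [proj', F1 z hu]
      rw [(projB z hu).repr.symm_apply_apply]
      exact hp i hi
    · rw [proj', F1 z hu]
      rw [(projB z hu).repr.symm_apply_apply]
      exact hn i hi
  · rintro ⟨w', hp, hn⟩
    refine ⟨(((projB z hu).repr.symm w' : OC z) : Euc (q+1)), fun i hi => ?_,
      fun i hi => ?_, ?_⟩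
    · rw [← F1 z hu]; exact hp i hi
    · rw [← F1 z hu]; exact hn i hi
    · exact Submodule.mem_orthogonal_singleton_iff_inner_left.1
        ((projB z hu).repr.symm w').2

theorem gp_proj (hu : z (Fin.last n) ≠ 0) (hgp : GP (q+1) z) : GP q (proj' z hu) := by
  intro s hs a hsum
  set u := z (Fin.last n) with hu_def
  set B := projB z hu
  have h1 : ∑ i ∈ s, a i • ((OC z).orthogonalProjectionOnto (z i.castSucc)) = 0 := by
    apply B.repr.injective
    rw [map_sum, map_zero]
    simpa [proj'] using hsum
  have h2 : ∑ i ∈ s, a i • (((OC z).orthogonalProjectionOnto (z i.castSucc)) : Euc (q+1))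
      = 0 := by
    have := congrArg (fun v : OC z => (v : Euc (q+1))) h1
    simpa using this
  set c : Fin n → ℝ := fun i => ⟪u, z i.castSucc⟫ / (‖u‖ : ℝ)^2 with hc
  have h3 : ∑ i ∈ s, a i • (z i.castSucc - c i • u) = 0 := by
    rw [← h2]
    apply Finset.sum_congr rfl
    intro i _
    congr 1
    rw [OC, Submodule.orthogonalProjectionOnto_orthogonal, Submodule.coe_mk,
      Submodule.starProjection_singleton]
    simp only [hc, RCLike.ofReal_real_eq_id, id_eq]
    rfl
  have expand : ∑ i ∈ s, a i • (z i.castSucc - c i • u)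
      = ∑ i ∈ s, a i • z i.castSucc - (∑ i ∈ s, a i * c i) • u := by
    rw [Finset.sum_smul]
    rw [← Finset.sum_sub_distrib]
    apply Finset.sum_congr rfl
    intro i _
    rw [smul_sub, smul_smul]
  rw [expand] at h3
  set a' : Fin (n+1) → ℝ := Fin.lastCases (-(∑ i ∈ s, a i * c i)) a with ha'
  set s' : Finset (Fin (n+1)) := insert (Fin.last n) (s.map Fin.castSuccEmb) with hs'
  have hcard : s'.card ≤ q + 1 := by
    calc s'.card ≤ (s.map Fin.castSuccEmb).card + 1 := Finset.card_insert_le _ _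
      _ = s.card + 1 := by rw [Finset.card_map]
      _ ≤ q + 1 := by omega
  have hsum' : ∑ j ∈ s', a' j • z j = 0 := by
    have hnm : Fin.last n ∉ s.map Fin.castSuccEmb := last_not_mem_e0 s
    rw [hs', Finset.sum_insert hnm, Finset.sum_map]
    have hl : a' (Fin.last n) = -(∑ i ∈ s, a i * c i) := by
      simp [ha']
    have hcst : ∀ i : Fin n, a' (Fin.castSuccEmb i) = a i := by
      intro i
      show a' (Fin.castSucc i) = a i
      simp [ha']
    rw [hl]
    have : ∑ i ∈ s, a' (Fin.castSuccEmb i) • z (Fin.castSuccEmb i)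
        = ∑ i ∈ s, a i • z i.castSucc := by
      apply Finset.sum_congr rfl
      intro i _
      rw [hcst i]
      rfl
    rw [this]
    have h4 : ∑ i ∈ s, a i • z i.castSucc = (∑ i ∈ s, a i * c i) • u :=
      sub_eq_zero.1 h3
    rw [h4, neg_smul]
    abel
  intro i hi
  have := hgp s' hcard a' hsum' (Fin.castSucc i)
    (Finset.mem_insert_of_mem (Finset.mem_map_of_mem _ hi))
  rw [ha'] at this
  simpa using this

end Proj

theorem gp_res {p n : ℕ} (z : Fin (n+1) → Euc p) (hgp : GP p z) :
    GP p (fun i : Fin n => z i.castSucc) := by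
  intro s hs a hsum
  have hsum' : ∑ j ∈ s.map Fin.castSuccEmb,
      (Fin.lastCases 0 a : Fin (n+1) → ℝ) j • z j = 0 := by
    rw [Finset.sum_map]
    have hc : ∀ x : Fin n, (Fin.lastCases 0 a : Fin (n+1) → ℝ) (Fin.castSuccEmb x)
        • z (Fin.castSuccEmb x) = a x • z x.castSucc := by
      intro x
      have hx : (Fin.castSuccEmb x : Fin (n+1)) = x.castSucc := rfl
      rw [hx]
      simp
    rw [Finset.sum_congr rfl (fun x _ => hc x)]
    exact hsum
  intro i hi
  have := hgp (s.map Fin.castSuccEmb) (by rw [Finset.card_map]; exact hs) _ hsum'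
    i.castSucc (Finset.mem_map_of_mem _ hi)
  simpa using this

theorem gp_ne_zero {p n : ℕ} (y : Fin n → Euc p) (hgp : GP p y) (hp : 1 ≤ p) (i : Fin n) :
    y i ≠ 0 := by
  intro h0
  have := hgp {i} (by simpa using hp) (fun _ => 1) (by simp [h0]) i
    (Finset.mem_singleton_self i)
  exact one_ne_zero this

theorem card_p0 {n : ℕ} (hn : 1 ≤ n) (y : Fin n → Euc 0) :
    Nat.card {S : Finset (Fin n) // SepD y S} = 0 := by
  have : IsEmpty {S : Finset (Fin n) // SepD y S} := by
    constructor
    rintro ⟨S, w, hp, hneg⟩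
    set i : Fin n := ⟨0, hn⟩
    have hz : ⟪w, y i⟫ = (0:ℝ) := by
      rw [PiLp.inner_apply]
      exact Finset.sum_of_isEmpty _
    by_cases hi : i ∈ S
    · exact absurd (hp i hi) (by rw [hz]; exact lt_irrefl 0)
    · exact absurd (hneg i hi) (by rw [hz]; exact lt_irrefl 0)
  exact Nat.card_of_isEmpty

theorem card_base {p : ℕ} (y : Fin 1 → Euc p) (h0 : y 0 ≠ 0) :
    Nat.card {S : Finset (Fin 1) // SepD y S} = 2 := by
  have hself : 0 < ⟪y 0, y 0⟫ := by
    rw [real_inner_self_eq_norm_sq]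
    exact pow_pos (norm_pos_iff.2 h0) 2
  have hall : ∀ S : Finset (Fin 1), SepD y S := by
    intro S
    by_cases h : (0 : Fin 1) ∈ S
    · refine ⟨y 0, fun i _ => ?_, fun i hi => ?_⟩
      · have : i = 0 := Subsingleton.elim i 0
        rw [this]; exact hself
      · have : i = 0 := Subsingleton.elim i 0
        rw [this] at hi; exact absurd h hi
    · refine ⟨-y 0, fun i hi => ?_, fun i _ => ?_⟩
      · have : i = 0 := Subsingleton.elim i 0
        rw [this] at hi; exact absurd hi h
      · have : i = 0 := Subsingleton.elim i 0
        rw [this, inner_neg_left]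
        linarith
  have he : Nat.card {S : Finset (Fin 1) // SepD y S} = Nat.card (Finset (Fin 1)) :=
    Nat.card_congr (Equiv.subtypeUnivEquiv hall)
  rw [he, Nat.card_eq_fintype_card, Fintype.card_finset]
  simp

theorem sum_choose_zero {p : ℕ} (hp : 1 ≤ p) :
    ∑ k ∈ Finset.range p, Nat.choose 0 k = 1 := by
  have h : ∀ k ∈ Finset.range p, Nat.choose 0 k = if k = 0 then 1 else 0 := by
    intro k _
    cases k <;> simp
  rw [Finset.sum_congr rfl h, Finset.sum_ite_eq' (Finset.range p) 0 (fun _ => 1)]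
  rw [if_pos (Finset.mem_range.2 (by omega))]

-- Pascal-type sum: ∑_{k<p} C(m+1,k) = ∑_{k<p} C(m,k) + ∑_{k<p-1} C(m,k)
theorem pascalSum (m p : ℕ) :
    ∑ k ∈ range p, Nat.choose (m+1) k
      = ∑ k ∈ range p, Nat.choose m k + ∑ k ∈ range (p-1), Nat.choose m k := by
  induction p with
  | zero => simp
  | succ p ih =>
    rw [Finset.sum_range_succ, ih, Finset.sum_range_succ]
    cases p with
    | zero => simp
    | succ q =>
      simp only [Nat.succ_sub_one, Finset.sum_range_succ]
      rw [Nat.choose_succ_succ]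
      ring

-- symmetry identity
theorem symmSum (n p : ℕ) (hn : 1 ≤ n) :
    2 ^ n - 2 * ∑ k ∈ Finset.range p, Nat.choose (n - 1) k
      = 2 * ∑ k ∈ Finset.range (n - p), Nat.choose (n - 1) k := by
  obtain ⟨m, rfl⟩ : ∃ m, n = m + 1 := ⟨n - 1, by omega⟩
  simp only [Nat.add_sub_cancel]
  by_cases hp : p ≤ m
  · have key : ∑ k ∈ range (m + 1 - p), Nat.choose m k
        = ∑ k ∈ Ico p (m+1), Nat.choose m k := by
      rw [Finset.sum_Ico_eq_sum_range]
      have := Finset.sum_range_reflect (fun j => Nat.choose m (p + j)) (m + 1 - p)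
      rw [← this]
      apply Finset.sum_congr rfl
      intro j hj
      simp only [Finset.mem_range] at hj
      have h1 : p + (m + 1 - p - 1 - j) = m - j := by omega
      rw [h1, Nat.choose_symm (by omega)]
    have split : ∑ k ∈ range p, Nat.choose m k + ∑ k ∈ Ico p (m+1), Nat.choose m k
        = ∑ k ∈ range (m+1), Nat.choose m k := by
      simp only [Finset.range_eq_Ico]
      rw [Finset.sum_Ico_consecutive _ (Nat.zero_le p) (by omega)]
    rw [Nat.sum_range_choose] at split
    have h2 : (2:ℕ)^(m+1) = 2 * 2^m := by ring
    omega
  · have h0 : m + 1 - p = 0 := by omega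
    rw [h0]
    have : ∑ k ∈ range p, Nat.choose m k = ∑ k ∈ range (m+1), Nat.choose m k := by
      symm
      apply Finset.sum_subset
      · intro k hk; simp only [mem_range] at *; omega
      · intro k _ hk; simp only [mem_range] at hk
        exact Nat.choose_eq_zero_of_lt (by omega)
    rw [this, Nat.sum_range_choose]
    have h2 : (2:ℕ)^(m+1) = 2 * 2^m := by ring
    simp [h2]

theorem cover_count : ∀ (n : ℕ), 1 ≤ n → ∀ (p : ℕ) (y : Fin n → Euc p), GP p y →
    Nat.card {S : Finset (Fin n) // SepD y S}
      = 2 * ∑ k ∈ Finset.range p, Nat.choose (n-1) k := by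
  intro n hn
  induction n, hn using Nat.le_induction with
  | base =>
    intro p y hgp
    match p, y, hgp with
    | 0, y, hgp => rw [card_p0 le_rfl y]; simp
    | (q+1), y, hgp =>
      rw [card_base y (gp_ne_zero y hgp (by omega) 0)]
      rw [show (1:ℕ) - 1 = 0 from rfl, sum_choose_zero (by omega : 1 ≤ q+1)]
  | succ n hn ih =>
    intro p y hgp
    match p, y, hgp with
    | 0, y, hgp => rw [card_p0 (by omega) y]; simp
    | (q+1), y, hgp =>
      have hu : y (Fin.last n) ≠ 0 := gp_ne_zero y hgp (by omega) _
      rw [card_step y hu]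
      rw [ih (q+1) _ (gp_res y hgp)]
      have hamb : Nat.card {T : Finset (Fin n) // Amb y T}
          = Nat.card {T : Finset (Fin n) // SepD (proj' y hu) T} :=
        Nat.card_congr (Equiv.subtypeEquivRight (amb_iff_sep y hu))
      rw [hamb, ih q _ (gp_proj y hu hgp)]
      have hps := pascalSum (n-1) (q+1)
      have hn1 : n - 1 + 1 = n := by omega
      rw [hn1] at hps
      have hn2 : n + 1 - 1 = n := by omega
      rw [hn2, hps]
      have hq : q + 1 - 1 = q := by omega
      rw [hq]
      ring

end

open Finset

/-- Cover's function counting theorem (Schläfli formula): for `n` points in `ℝ^p` in general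
position, the number of homogeneously linearly separable dichotomies is
`C(n,p) = 2 ∑_{k=0}^{p-1} binom(n-1,k)`, and consequently the number of non-separable
dichotomies is `2^n - C(n,p) = 2 ∑_{k=0}^{n-p-1} binom(n-1,k)`. -/
theorem stmt10 (n p : ℕ) (hp : 1 ≤ p) (hn : 1 ≤ n) (x : Fin n → Fin p → ℝ)
    (hgen : ∀ s : Finset (Fin n), s.card ≤ p →
      LinearIndependent ℝ (fun i : s => x i)) :
    Nat.card {S : Finset (Fin n) // ∃ w : Fin p → ℝ,
        (∀ i ∈ S, 0 < ∑ j, w j * x i j) ∧ ∀ i ∉ S, (∑ j, w j * x i j) < 0}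
      = 2 * ∑ k ∈ Finset.range p, Nat.choose (n - 1) k
    ∧ 2 ^ n - 2 * ∑ k ∈ Finset.range p, Nat.choose (n - 1) k
      = 2 * ∑ k ∈ Finset.range (n - p), Nat.choose (n - 1) k := by
  have hgp : GP p (fun i => WithLp.toLp 2 (x i)) := by
    intro s hs a hsum i hi
    have hli := hgen s hs
    rw [Fintype.linearIndependent_iff] at hli
    refine hli (fun j => a j) ?_ ⟨i, hi⟩
    have h2 : ∑ j : s, a (j : Fin n) • x (j : Fin n) = ∑ j ∈ s, a j • x j :=
      Finset.sum_coe_sort s (fun i => a i • x i)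
    exact h2.trans (by simpa using congrArg WithLp.ofLp hsum)
  have hin : ∀ (w : Euc p) (i : Fin n), ⟪w, WithLp.toLp 2 (x i)⟫ = ∑ j, w j * x i j := by
    intro w i
    simp [PiLp.inner_apply, RCLike.inner_apply, starRingEnd_apply, mul_comm]
  constructor
  · have key := cover_count n hn p _ hgp
    rw [← key]
    apply Nat.card_congr
    apply Equiv.subtypeEquivRight
    intro S
    constructor
    · rintro ⟨w, h1, h2⟩
      refine ⟨WithLp.toLp 2 w, fun i hi => ?_, fun i hi => ?_⟩
      · rw [hin (WithLp.toLp 2 w) i]; exact h1 i hi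
      · rw [hin (WithLp.toLp 2 w) i]; exact h2 i hi
    · rintro ⟨w, h1, h2⟩
      refine ⟨w, fun i hi => ?_, fun i hi => ?_⟩
      · rw [← hin w i]; exact h1 i hi
      · rw [← hin w i]; exact h2 i hi
  · exact symmSum n p hn
end

section
/- Let B be a family of subsets of {1,...,n} with |B| ≤ 2 Σ_{k=0}^{m} binom(n,k) for some m ≤ n, and fix a subset T ⊆ {1,...,n}. Let S be a random subset where each element i is included independently with probability 1-q if i ∈ T and probability q if i ∉ T, where q ≤ 1/2. Then P[S ∈ B] ≤ 2 P[Bin(n, q) ≤ m]. -/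
open Finset
open scoped symmDiff

lemma stmt12_aux (n m : ℕ) (hm : m ≤ n) (w c a : ℕ → ℝ)
    (hw0 : ∀ k, 0 ≤ w k) (wmono : ∀ j k, j ≤ k → k ≤ n → w k ≤ w j)
    (ha0 : ∀ k, 0 ≤ a k) (hac : ∀ k, a k ≤ c k)
    (htot : ∑ k ∈ Finset.range (n + 1), a k ≤ 2 * ∑ k ∈ Finset.range (m + 1), c k) :
    ∑ k ∈ Finset.range (n + 1), a k * w k
      ≤ 2 * ∑ k ∈ Finset.range (m + 1), c k * w k := by
  have hsplit : ∀ f : ℕ → ℝ, ∑ k ∈ Finset.range (m + 1), f k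
      + ∑ k ∈ Finset.Ico (m + 1) (n + 1), f k = ∑ k ∈ Finset.range (n + 1), f k := by
    intro f
    rw [Finset.range_eq_Ico, Finset.range_eq_Ico]
    exact Finset.sum_Ico_consecutive f (show 0 ≤ m + 1 by omega) (show m + 1 ≤ n + 1 by omega)
  have h2 : ∑ k ∈ Finset.Ico (m + 1) (n + 1), a k * w k
      ≤ (∑ k ∈ Finset.Ico (m + 1) (n + 1), a k) * w m := by
    rw [Finset.sum_mul]
    apply Finset.sum_le_sum
    intro k hk
    rw [Finset.mem_Ico] at hk
    exact mul_le_mul_of_nonneg_left (wmono m k (by omega) (by omega)) (ha0 k)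
  have h3 : ∑ k ∈ Finset.Ico (m + 1) (n + 1), a k
      ≤ 2 * ∑ k ∈ Finset.range (m + 1), c k - ∑ k ∈ Finset.range (m + 1), a k := by
    have := hsplit a
    linarith
  have hwm := hw0 m
  have h4 : (∑ k ∈ Finset.Ico (m + 1) (n + 1), a k) * w m
      ≤ (2 * ∑ k ∈ Finset.range (m + 1), c k - ∑ k ∈ Finset.range (m + 1), a k) * w m :=
    mul_le_mul_of_nonneg_right h3 hwm
  have key : ∑ k ∈ Finset.range (m + 1), (a k * w k + 2 * c k * w m)
      ≤ ∑ k ∈ Finset.range (m + 1), (2 * (c k * w k) + a k * w m) := by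
    apply Finset.sum_le_sum
    intro k hk
    rw [Finset.mem_range] at hk
    have hwk : w m ≤ w k := wmono k m (by omega) hm
    have h1 := ha0 k
    have h2 := hac k
    have h3 := hw0 k
    nlinarith [mul_nonneg (sub_nonneg.mpr h2) (sub_nonneg.mpr hwk),
      mul_nonneg (le_trans h1 h2) (sub_nonneg.mpr hwk)]
  rw [Finset.sum_add_distrib, Finset.sum_add_distrib, ← Finset.sum_mul, ← Finset.sum_mul,
    ← Finset.mul_sum, ← Finset.mul_sum] at key
  have hfin := hsplit (fun k => a k * w k)
  linarith

/-- Let `B` be a family of subsets of `{1,…,n}` with `|B| ≤ 2 ∑_{k≤m} binom(n,k)`, and let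
`S` be a random subset including each `i ∈ T` with probability `1-q` and each `i ∉ T`
with probability `q ≤ 1/2` (so `P[S = A] = q^{|T Δ A|}(1-q)^{n-|T Δ A|}`).  Then
`P[S ∈ B] ≤ 2 P[Bin(n,q) ≤ m]`. -/
theorem stmt12 (n m : ℕ) (hm : m ≤ n) (q : ℝ) (hq0 : 0 ≤ q) (hq : q ≤ 1 / 2)
    (T : Finset (Fin n)) (B : Finset (Finset (Fin n)))
    (hB : (B.card : ℝ) ≤ 2 * ∑ k ∈ Finset.range (m + 1), (Nat.choose n k : ℝ)) :
    ∑ A ∈ B, q ^ (T ∆ A).card * (1 - q) ^ (n - (T ∆ A).card)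
      ≤ 2 * ∑ k ∈ Finset.range (m + 1),
          (Nat.choose n k : ℝ) * q ^ k * (1 - q) ^ (n - k) := by
  set w : ℕ → ℝ := fun k => q ^ k * (1 - q) ^ (n - k) with hw
  have hq1 : q ≤ 1 - q := by linarith
  have h1q : (0:ℝ) ≤ 1 - q := le_trans hq0 hq1
  have hw0 : ∀ k, 0 ≤ w k := fun k => mul_nonneg (pow_nonneg hq0 _) (pow_nonneg h1q _)
  have wmono : ∀ j k, j ≤ k → k ≤ n → w k ≤ w j := by
    intro j k hjk hkn
    obtain ⟨d, rfl⟩ := Nat.exists_eq_add_of_le hjk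
    have h1 : n - j = (n - (j + d)) + d := by omega
    simp only [hw, h1, pow_add]
    calc q ^ j * q ^ d * (1 - q) ^ (n - (j + d))
        ≤ q ^ j * (1 - q) ^ d * (1 - q) ^ (n - (j + d)) := by
          apply mul_le_mul_of_nonneg_right _ (pow_nonneg h1q _)
          exact mul_le_mul_of_nonneg_left (pow_le_pow_left₀ hq0 hq1 d) (pow_nonneg hq0 _)
      _ = q ^ j * ((1 - q) ^ (n - (j + d)) * (1 - q) ^ d) := by ring
  set a : ℕ → ℝ := fun k => ((B.filter (fun A => (T ∆ A).card = k)).card : ℝ) with ha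
  have ha0 : ∀ k, 0 ≤ a k := fun k => Nat.cast_nonneg _
  have hmaps : ∀ A ∈ B, (T ∆ A).card ∈ Finset.range (n + 1) := by
    intro A _
    simp only [Finset.mem_range, Nat.lt_succ_iff]
    calc (T ∆ A).card ≤ (Finset.univ : Finset (Fin n)).card :=
          Finset.card_le_card (Finset.subset_univ _)
      _ = n := by simp
  have hsum : ∑ A ∈ B, w (T ∆ A).card = ∑ k ∈ Finset.range (n + 1), a k * w k := by
    rw [← Finset.sum_fiberwise_of_maps_to hmaps (fun A => w (T ∆ A).card)]
    refine Finset.sum_congr rfl fun k _ => ?_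
    rw [Finset.sum_congr rfl (fun A hA => by rw [(Finset.mem_filter.mp hA).2]),
      Finset.sum_const, nsmul_eq_mul]
  have hac : ∀ k, a k ≤ (n.choose k : ℝ) := by
    intro k
    rw [ha]
    have hcard : (B.filter (fun A => (T ∆ A).card = k)).card ≤ n.choose k := by
      have hinj : ∀ A ∈ B.filter (fun A => (T ∆ A).card = k),
          ∀ A' ∈ B.filter (fun A => (T ∆ A).card = k), T ∆ A = T ∆ A' → A = A' := by
        intro A _ A' _ h
        have := congrArg (fun S => T ∆ S) h
        simpa [symmDiff_symmDiff_cancel_left] using this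
      calc (B.filter (fun A => (T ∆ A).card = k)).card
          ≤ ((Finset.univ : Finset (Fin n)).powersetCard k).card := by
            apply Finset.card_le_card_of_injOn (fun A => T ∆ A) _ hinj
            intro A hA
            rw [Finset.mem_coe, Finset.mem_powersetCard]
            exact ⟨Finset.subset_univ _, (Finset.mem_filter.mp (Finset.mem_coe.mp hA)).2⟩
        _ = n.choose k := by rw [Finset.card_powersetCard]; simp
    show ((B.filter (fun A => (T ∆ A).card = k)).card : ℝ) ≤ (n.choose k : ℝ)
    exact_mod_cast hcard
  have htot : ∑ k ∈ Finset.range (n + 1), a k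
      ≤ 2 * ∑ k ∈ Finset.range (m + 1), (Nat.choose n k : ℝ) := by
    have := Finset.card_eq_sum_card_fiberwise hmaps
    calc ∑ k ∈ Finset.range (n + 1), a k = (B.card : ℝ) := by
          rw [this]; push_cast; rfl
      _ ≤ _ := hB
  have main := stmt12_aux n m hm w (fun k => (Nat.choose n k : ℝ)) a hw0 wmono ha0 hac htot
  calc ∑ A ∈ B, q ^ (T ∆ A).card * (1 - q) ^ (n - (T ∆ A).card)
      = ∑ A ∈ B, w (T ∆ A).card := rfl
    _ = ∑ k ∈ Finset.range (n + 1), a k * w k := hsum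
    _ ≤ 2 * ∑ k ∈ Finset.range (m + 1), (Nat.choose n k : ℝ) * w k := main
    _ = _ := by
        congr 1
        exact Finset.sum_congr rfl fun k _ => by rw [hw]; ring
end
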